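/- (Catastrophic market failure with identical distributions as K → ∞.) Suppose all idiosyncratic hazards are equal and independent of K: A_i(ε) = A(ε) > 0 for every i = 1, …, K. With τ_(K) = max(τ_1, …, τ_K), the probability of a catastrophic market failure satisfies lim_{K → ∞} P(τ_(K) ≤ ε) = 1 − e^{−A_0(ε)} = P(η_0 ≤ ε); i.e., as the number of G-SIBs tends to infinity, the probability that all banks default within [0, ε] converges to the probability that a market-wide stress event occurs by time ε. -/

import Mathlib

open MeasureTheory ProbabilityTheory

/-- The cumulative hazard `A(t) = ∫_0^t α(s) ds`. -/
noncomputable def cumHaz (α : ℝ → ℝ) (t : ℝ) : ℝ := ∫ s in (0:ℝ)..t, α s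

/-- The first time `s ≥ 0` at which the cumulative hazard reaches level `z`,
i.e. `inf {s ≥ 0 : A(s) ≥ z}`. -/
noncomputable def hitTime (α : ℝ → ℝ) (z : ℝ) : ℝ :=
  sInf {s : ℝ | 0 ≤ s ∧ z ≤ cumHaz α s}


lemma cumHaz_intervalIntegrable {α : ℝ → ℝ} (hcont : ContinuousOn α (Set.Ici 0))
    {s t : ℝ} (hs : 0 ≤ s) (ht : 0 ≤ t) : IntervalIntegrable α volume s t := by
  apply ContinuousOn.intervalIntegrable
  apply hcont.mono
  intro x hx
  exact le_trans (le_min hs ht) hx.1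

lemma cumHaz_mono {α : ℝ → ℝ} (hpos : ∀ t, 0 ≤ t → 0 < α t)
    (hcont : ContinuousOn α (Set.Ici 0)) {s t : ℝ} (hs : 0 ≤ s) (hst : s ≤ t) :
    cumHaz α s ≤ cumHaz α t := by
  have ht : 0 ≤ t := hs.trans hst
  have h1 : cumHaz α t - cumHaz α s = ∫ x in s..t, α x := by
    unfold cumHaz
    exact intervalIntegral.integral_interval_sub_left
      (cumHaz_intervalIntegrable hcont le_rfl ht) (cumHaz_intervalIntegrable hcont le_rfl hs)
  have h2 : 0 ≤ ∫ x in s..t, α x := by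
    apply intervalIntegral.integral_nonneg hst
    intro u hu
    exact (hpos u (hs.trans hu.1)).le
  linarith

lemma cumHaz_continuousOn {α : ℝ → ℝ} (hcont : ContinuousOn α (Set.Ici 0)) :
    ContinuousOn (cumHaz α) (Set.Ici 0) := by
  intro x hx
  have hx0 : (0:ℝ) ≤ x := hx
  have h1 : ContinuousWithinAt (cumHaz α) (Set.Icc 0 (x+1)) x := by
    apply intervalIntegral.continuousWithinAt_primitive (measure_singleton x)
    have := cumHaz_intervalIntegrable hcont (le_refl (0:ℝ)) (by linarith : (0:ℝ) ≤ x + 1)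
    simpa [min_self, max_eq_right (by linarith : (0:ℝ) ≤ x + 1)] using this
  have heq : Set.Icc 0 (x+1) = Set.Ici 0 ∩ Set.Iic (x+1) := (Set.Ici_inter_Iic).symm
  rw [heq] at h1
  exact (continuousWithinAt_inter (Iic_mem_nhds (by linarith))).mp h1

lemma hitTime_le_iff {α : ℝ → ℝ} (hpos : ∀ t, 0 ≤ t → 0 < α t)
    (hcont : ContinuousOn α (Set.Ici 0))
    (hinf : Filter.Tendsto (cumHaz α) Filter.atTop Filter.atTop)
    {ε : ℝ} (hε : 0 ≤ ε) (z : ℝ) :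
    hitTime α z ≤ ε ↔ z ≤ cumHaz α ε := by
  set S := {s : ℝ | 0 ≤ s ∧ z ≤ cumHaz α s} with hS
  have hbdd : BddBelow S := ⟨0, fun s hs => hs.1⟩
  constructor
  · intro h
    have hSeq : S = Set.Ici 0 ∩ cumHaz α ⁻¹' Set.Ici z := by
      ext s; simp [hS, Set.mem_Ici, and_comm]
    have hclosed : IsClosed S := by
      rw [hSeq]
      exact (cumHaz_continuousOn hcont).preimage_isClosed_of_isClosed isClosed_Ici isClosed_Ici
    have hne : S.Nonempty := by
      obtain ⟨s, hs1, hs2⟩ := ((hinf.eventually_ge_atTop z).and (Filter.eventually_ge_atTop 0)).exists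
      exact ⟨s, hs2, hs1⟩
    have hmem := hclosed.csInf_mem hne hbdd
    exact hmem.2.trans (cumHaz_mono hpos hcont hmem.1 h)
  · intro h
    exact csInf_le hbdd ⟨hε, h⟩

lemma cumHaz_nonneg {α : ℝ → ℝ} (hpos : ∀ t, 0 ≤ t → 0 < α t)
    (hcont : ContinuousOn α (Set.Ici 0)) {t : ℝ} (ht : 0 ≤ t) : 0 ≤ cumHaz α t := by
  have h0 : cumHaz α 0 = 0 := intervalIntegral.integral_same
  linarith [cumHaz_mono hpos hcont le_rfl ht]

/-- (Catastrophic market failure with identical distributions as `K → ∞`.)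
With an infinite sequence of banks all sharing the idiosyncratic hazard `α` (so that
`A_i(ε) = A(ε) > 0` for all `i`), `τ_i = min (η_0, η_i)` and `τ_(K) = max (τ_1, …, τ_K)`,
`lim_{K → ∞} P(τ_(K) ≤ ε) = 1 − e^{−A_0(ε)} = P(η_0 ≤ ε)`. -/
theorem catastrophic_market_failure_iid_limit
    {Ω : Type*} [MeasurableSpace Ω] (P : Measure Ω) [IsProbabilityMeasure P]
    (Z : ℕ → Ω → ℝ) (α₀ α : ℝ → ℝ)
    (hZmeas : ∀ i, Measurable (Z i))
    (hZindep : iIndepFun Z P)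
    (hZexp : ∀ i, ∀ t : ℝ, 0 ≤ t → P {ω | t < Z i ω} = ENNReal.ofReal (Real.exp (-t)))
    (hα₀pos : ∀ t, 0 ≤ t → 0 < α₀ t) (hαpos : ∀ t, 0 ≤ t → 0 < α t)
    (hα₀cont : ContinuousOn α₀ (Set.Ici 0)) (hαcont : ContinuousOn α (Set.Ici 0))
    (hA₀inf : Filter.Tendsto (cumHaz α₀) Filter.atTop Filter.atTop)
    (hAinf : Filter.Tendsto (cumHaz α) Filter.atTop Filter.atTop)
    (ε : ℝ) (hε : 0 < ε) (hAε : 0 < cumHaz α ε) :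
    Filter.Tendsto
      (fun K : ℕ => P {ω | ∀ i : ℕ, 1 ≤ i → i ≤ K →
          min (hitTime α₀ (Z 0 ω)) (hitTime α (Z i ω)) ≤ ε})
      Filter.atTop (nhds (ENNReal.ofReal (1 - Real.exp (-cumHaz α₀ ε))))
    ∧ ENNReal.ofReal (1 - Real.exp (-cumHaz α₀ ε)) = P {ω | hitTime α₀ (Z 0 ω) ≤ ε} := by
  set a := cumHaz α₀ ε with ha_def
  set b := cumHaz α ε with hb_def
  have ha0 : 0 ≤ a := cumHaz_nonneg hα₀pos hα₀cont hε.le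
  have hb0 : 0 ≤ b := hAε.le
  have hiff0 : ∀ z, hitTime α₀ z ≤ ε ↔ z ≤ a := hitTime_le_iff hα₀pos hα₀cont hA₀inf hε.le
  have hiff : ∀ z, hitTime α z ≤ ε ↔ z ≤ b := hitTime_le_iff hαpos hαcont hAinf hε.le
  -- probability of {Z i ≤ c}
  have hle : ∀ (i : ℕ) (c : ℝ), 0 ≤ c →
      P {ω | Z i ω ≤ c} = ENNReal.ofReal (1 - Real.exp (-c)) := by
    intro i c hc
    have hcompl : {ω | Z i ω ≤ c} = {ω | c < Z i ω}ᶜ := by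
      ext ω; simp [not_lt]
    have hm : MeasurableSet {ω | c < Z i ω} := measurableSet_lt measurable_const (hZmeas i)
    rw [hcompl, prob_compl_eq_one_sub hm, hZexp i c hc,
      ENNReal.ofReal_sub _ (Real.exp_nonneg _), ENNReal.ofReal_one]
  -- the second claim
  have hsecond : ENNReal.ofReal (1 - Real.exp (-a)) = P {ω | hitTime α₀ (Z 0 ω) ≤ ε} := by
    rw [show {ω | hitTime α₀ (Z 0 ω) ≤ ε} = {ω | Z 0 ω ≤ a} by ext ω; simp [hiff0]]
    exact (hle 0 a ha0).symm
  refine ⟨?_, hsecond⟩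
  -- event rewrite
  have hset : ∀ K : ℕ, {ω | ∀ i : ℕ, 1 ≤ i → i ≤ K →
      min (hitTime α₀ (Z 0 ω)) (hitTime α (Z i ω)) ≤ ε}
      = {ω | Z 0 ω ≤ a} ∪ ({ω | a < Z 0 ω} ∩ ⋂ i ∈ Finset.Icc 1 K, {ω | Z i ω ≤ b}) := by
    intro K
    ext ω
    simp only [Set.mem_setOf_eq, Set.mem_union, Set.mem_inter_iff, Set.mem_iInter,
      min_le_iff, hiff0, hiff, Finset.mem_Icc]
    constructor
    · intro h
      by_cases hZ : Z 0 ω ≤ a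
      · exact Or.inl hZ
      · refine Or.inr ⟨lt_of_not_ge hZ, fun i hi => ?_⟩
        rcases h i hi.1 hi.2 with h' | h'
        · exact absurd h' hZ
        · exact h'
    · rintro (h | ⟨_, h⟩) i h1 h2
      · exact Or.inl h
      · exact Or.inr (h i ⟨h1, h2⟩)
  -- independence computation
  have hq0 : 0 ≤ 1 - Real.exp (-b) := by
    have := Real.exp_le_one_iff.mpr (neg_nonpos.mpr hb0); linarith
  set s : ℕ → Set ℝ := fun i => if i = 0 then Set.Ioi a else Set.Iic b with hs_def
  have hval : ∀ K : ℕ, P {ω | ∀ i : ℕ, 1 ≤ i → i ≤ K →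
      min (hitTime α₀ (Z 0 ω)) (hitTime α (Z i ω)) ≤ ε}
      = ENNReal.ofReal ((1 - Real.exp (-a)) +
          Real.exp (-a) * (1 - Real.exp (-b)) ^ K) := by
    intro K
    rw [hset K]
    have hdisj : Disjoint {ω | Z 0 ω ≤ a}
        ({ω | a < Z 0 ω} ∩ ⋂ i ∈ Finset.Icc 1 K, {ω | Z i ω ≤ b}) := by
      refine Set.disjoint_left.mpr fun ω h1 h2 => ?_
      simp only [Set.mem_setOf_eq, Set.mem_inter_iff] at h1 h2
      exact absurd h2.1 (not_lt.mpr h1)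
    have hmB : MeasurableSet ({ω | a < Z 0 ω} ∩ ⋂ i ∈ Finset.Icc 1 K, {ω | Z i ω ≤ b}) := by
      refine (measurableSet_lt measurable_const (hZmeas 0)).inter ?_
      exact MeasurableSet.biInter (Finset.Icc 1 K).countable_toSet
        fun i _ => measurableSet_le (hZmeas i) measurable_const
    rw [measure_union hdisj hmB]
    have hint : {ω | a < Z 0 ω} ∩ ⋂ i ∈ Finset.Icc 1 K, {ω | Z i ω ≤ b}
        = ⋂ i ∈ insert 0 (Finset.Icc 1 K), Z i ⁻¹' s i := by
      ext ω
      simp only [Set.mem_inter_iff, Set.mem_setOf_eq, Set.mem_iInter, Finset.mem_insert,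
        Finset.mem_Icc, Set.mem_preimage, hs_def]
      constructor
      · rintro ⟨h0, hI⟩ i hi
        rcases hi with rfl | hi
        · simpa using h0
        · have hne : i ≠ 0 := by omega
          simp only [if_neg hne, Set.mem_Iic]
          exact hI i hi
      · intro h
        refine ⟨by simpa using h 0 (Or.inl rfl), fun i hi => ?_⟩
        have hne : i ≠ 0 := by omega
        simpa [if_neg hne] using h i (Or.inr hi)
    have hindep := hZindep.measure_inter_preimage_eq_mul (insert 0 (Finset.Icc 1 K))
      (sets := s) (fun i _ => by
        by_cases h0 : i = 0 <;> simp [hs_def, h0, measurableSet_Ioi, measurableSet_Iic])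
    rw [hint, hindep, Finset.prod_insert (by simp)]
    have h0 : P (Z 0 ⁻¹' s 0) = ENNReal.ofReal (Real.exp (-a)) := by
      have : Z 0 ⁻¹' s 0 = {ω | a < Z 0 ω} := by
        simp [hs_def, Set.preimage, Set.mem_Ioi]
      rw [this, hZexp 0 a ha0]
    have hq : ∀ i ∈ Finset.Icc 1 K, P (Z i ⁻¹' s i) = ENNReal.ofReal (1 - Real.exp (-b)) := by
      intro i hi
      have hi0 : i ≠ 0 := by have := (Finset.mem_Icc.mp hi).1; omega
      have : Z i ⁻¹' s i = {ω | Z i ω ≤ b} := by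
        simp [hs_def, hi0, Set.preimage, Set.mem_Iic]
      rw [this, hle i b hb0]
    rw [Finset.prod_congr rfl hq, Finset.prod_const, Nat.card_Icc]
    simp only [Nat.add_sub_cancel]
    rw [hle 0 a ha0, h0, ← ENNReal.ofReal_pow (by
        have := Real.exp_le_one_iff.mpr (neg_nonpos.mpr hb0); linarith),
      ← ENNReal.ofReal_mul (Real.exp_nonneg _),
      ← ENNReal.ofReal_add (by
        have := Real.exp_le_one_iff.mpr (neg_nonpos.mpr ha0); linarith)
        (mul_nonneg (Real.exp_nonneg _) (pow_nonneg hq0 _))]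
  simp only [hval]
  -- limit
  have hq1 : 1 - Real.exp (-b) < 1 := by
    have := Real.exp_pos (-b); linarith
  have hlim : Filter.Tendsto (fun K : ℕ => (1 - Real.exp (-a)) +
      Real.exp (-a) * (1 - Real.exp (-b)) ^ K) Filter.atTop (nhds (1 - Real.exp (-a))) := by
    have h1 : Filter.Tendsto (fun K : ℕ => (1 - Real.exp (-b)) ^ K)
        Filter.atTop (nhds 0) := by
      apply tendsto_pow_atTop_nhds_zero_of_lt_one hq0 hq1
    have h2 : Filter.Tendsto (fun K : ℕ => Real.exp (-a) * (1 - Real.exp (-b)) ^ K)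
        Filter.atTop (nhds 0) := by
      simpa using h1.const_mul (Real.exp (-a))
    have h3 := (tendsto_const_nhds (x := 1 - Real.exp (-a)) (f := Filter.atTop (α := ℕ))).add h2
    simpa using h3
  exact (ENNReal.continuous_ofReal.tendsto _).comp hlim
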